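/- (Tchakaloff) Let μ be a compactly supported probability measure on ℝ^d and N ∈ ℕ. Then there exist M ≤ C(d+N, d) points x_1,…,x_M in the support of μ and positive weights w_1,…,w_M with ∑ w_i = 1 such that ∑_{i=1}^M w_i p(x_i) = ∫ p dμ for every polynomial p of total degree at most N. -/

import Mathlib

open MeasureTheory

/-- The (topological) support of a measure: points all of whose neighborhoods have
positive measure. -/
def measSupp {X : Type*} [TopologicalSpace X] [MeasurableSpace X]
    (μ : Measure X) : Set X :=
  {x | ∀ U ∈ nhds x, μ U ≠ 0}

lemma measSupp_ae {X : Type*} [TopologicalSpace X] [MeasurableSpace X]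
    [SecondCountableTopology X] (μ : Measure X) :
    ∀ᵐ x ∂μ, x ∈ measSupp μ := by
  have h : ∀ x ∈ (measSupp μ)ᶜ, ∃ U ∈ nhds x, μ U = 0 := by
    intro x hx
    simpa [measSupp] using hx
  choose! U hU hU0 using h
  obtain ⟨t, hts, htc, htcov⟩ := TopologicalSpace.countable_cover_nhdsWithin
    (f := U) (s := (measSupp μ)ᶜ) (fun x hx => nhdsWithin_le_nhds (hU x hx))
  refine mem_ae_iff.2 ?_
  have hset : {x | (fun x => x ∈ measSupp μ) x}ᶜ = (measSupp μ)ᶜ := rfl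
  rw [hset]
  refine measure_mono_null htcov ?_
  rw [measure_biUnion_null_iff htc]
  exact fun x hx => hU0 x (hts hx)

lemma isCompact_convexHull' {E : Type*} [NormedAddCommGroup E] [NormedSpace ℝ E]
    [FiniteDimensional ℝ E] {C : Set E} (hC : IsCompact C) :
    IsCompact (convexHull ℝ C) := by
  classical
  set n := Module.finrank ℝ E with hn
  set G : (Fin (n+1) → ℝ) × (Fin (n+1) → E) → E := fun q => ∑ j, q.1 j • q.2 j with hG
  set S : Set ((Fin (n+1) → ℝ) × (Fin (n+1) → E)) :=
    (stdSimplex ℝ (Fin (n+1))) ×ˢ (Set.pi Set.univ fun _ => C) with hS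
  have hScpt : IsCompact S := IsCompact.prod (isCompact_stdSimplex (𝕜 := ℝ) (ι := Fin (n+1)))
    (isCompact_univ_pi fun _ => hC)
  have hcont : Continuous G := by
    apply continuous_finset_sum
    intro j _
    exact ((continuous_apply j).comp continuous_fst).smul
      ((continuous_apply j).comp continuous_snd)
  have himg : convexHull ℝ C = G '' S := by
    apply Set.Subset.antisymm
    · intro x hx
      obtain ⟨ι, hfin, z, w, hzC, hai, hpos, hsum, hcomb⟩ :=
        eq_pos_convex_span_of_mem_convexHull hx
      have hne : Nonempty ι := by
        by_contra h
        rw [not_nonempty_iff] at h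
        rw [Finset.univ_eq_empty, Finset.sum_empty] at hsum
        norm_num at hsum
      obtain ⟨i₀⟩ := hne
      have hcard : Fintype.card ι ≤ n + 1 := by
        refine hai.card_le_finrank_succ.trans ?_
        have := Submodule.finrank_le (vectorSpan ℝ (Set.range z))
        omega
      obtain ⟨e⟩ := Function.Embedding.nonempty_of_card_le
        (by simpa using hcard : Fintype.card ι ≤ Fintype.card (Fin (n+1)))
      set w' : Fin (n+1) → ℝ := fun j => if h : ∃ i, e i = j then w h.choose else 0 with hw'
      set z' : Fin (n+1) → E := fun j => if h : ∃ i, e i = j then z h.choose else z i₀ with hz'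
      have hwe : ∀ i, w' (e i) = w i := by
        intro i
        have h : ∃ i', e i' = e i := ⟨i, rfl⟩
        simp only [hw', dif_pos h]
        have := e.injective h.choose_spec
        rw [this]
      have hze : ∀ i, z' (e i) = z i := by
        intro i
        have h : ∃ i', e i' = e i := ⟨i, rfl⟩
        simp only [hz', dif_pos h]
        have := e.injective h.choose_spec
        rw [this]
      have hzero : ∀ j ∉ Finset.univ.image e, w' j = 0 := by
        intro j hj
        have : ¬ ∃ i, e i = j := by
          intro ⟨i, hi⟩
          exact hj (Finset.mem_image.2 ⟨i, Finset.mem_univ _, hi⟩)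
        simp only [hw', dif_neg this]
      have hsum' : ∀ (F : Fin (n+1) → ℝ) (G' : Fin (n+1) → E), True := fun _ _ => trivial
      refine ⟨(w', z'), ⟨?_, ?_⟩, ?_⟩
      · constructor
        · intro j
          by_cases h : ∃ i, e i = j
          · simp only [hw', dif_pos h]; exact (hpos _).le
          · simp only [hw', dif_neg h]; exact le_refl 0
        · rw [← Finset.sum_subset (Finset.subset_univ (Finset.univ.image e))
            (fun j _ hj => hzero j hj)]
          rw [Finset.sum_image (fun a _ b _ h => e.injective h)]
          simpa only [hwe] using hsum
      · intro j _
        by_cases h : ∃ i, e i = j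
        · simp only [hz', dif_pos h]
          exact hzC (Set.mem_range_self _)
        · simp only [hz', dif_neg h]
          exact hzC (Set.mem_range_self _)
      · show ∑ j, w' j • z' j = x
        rw [← Finset.sum_subset (Finset.subset_univ (Finset.univ.image e))
            (fun j _ hj => by rw [hzero j hj, zero_smul])]
        rw [Finset.sum_image (fun a _ b _ h => e.injective h)]
        simp only [hwe, hze]
        exact hcomb
    · rintro _ ⟨⟨w, z⟩, ⟨⟨hw0, hw1⟩, hzC⟩, rfl⟩
      exact (convex_convexHull ℝ C).sum_mem (fun j _ => hw0 j) hw1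
        (fun j _ => subset_convexHull ℝ C (hzC j (Set.mem_univ j)))
  rw [himg]
  exact hScpt.image hcont

def degLEEquiv (d N : ℕ) :
    {f : Fin d → ℕ // ∑ i, f i ≤ N} ≃ {g : Fin (d+1) → ℕ // ∑ i, g i = N} where
  toFun f := ⟨Fin.snoc f.1 (N - ∑ i, f.1 i), by
    rw [Fin.sum_univ_castSucc]
    simp only [Fin.snoc_castSucc, Fin.snoc_last]
    exact Nat.add_sub_cancel' f.2⟩
  invFun g := ⟨Fin.init g.1, by
    have := g.2
    rw [Fin.sum_univ_castSucc] at this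
    have h : ∑ i : Fin d, g.1 i.castSucc ≤ N := by omega
    simpa [Fin.init] using h⟩
  left_inv f := by
    ext i
    simp [Fin.init, Fin.snoc_castSucc]
  right_inv g := by
    have hg := g.2
    rw [Fin.sum_univ_castSucc] at hg
    have hval : N - ∑ i : Fin d, Fin.init g.1 i = g.1 (Fin.last d) := by
      simp only [Fin.init]
      omega
    apply Subtype.ext
    show Fin.snoc (Fin.init g.1) (N - ∑ i, Fin.init g.1 i) = g.1
    rw [hval, Fin.snoc_init_self]

lemma multiset_symm_apply {D : ℕ} (f : Fin D →₀ ℕ) :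
    (Multiset.toFinsupp (α := Fin D)).symm f = Finsupp.toMultiset f := rfl

noncomputable def funMultisetEquiv (D : ℕ) : (Fin D → ℕ) ≃ Multiset (Fin D) where
  toFun g := Finsupp.toMultiset (Finsupp.equivFunOnFinite.symm g)
  invFun m := Finsupp.equivFunOnFinite (Multiset.toFinsupp m)
  left_inv g := by simp [Finsupp.toMultiset_toFinsupp]
  right_inv m := by simp [Multiset.toFinsupp_toMultiset]

noncomputable def degEqEquivSym (D N : ℕ) :
    {g : Fin D → ℕ // ∑ i, g i = N} ≃ Sym (Fin D) N :=
  Equiv.subtypeEquiv (funMultisetEquiv D)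
    (by
      intro g
      have hcard : Multiset.card (Finsupp.toMultiset (Finsupp.equivFunOnFinite.symm g))
          = ∑ i, g i := by
        rw [Finsupp.card_toMultiset, Finsupp.sum_fintype _ _ (fun _ => rfl)]
        simp
      constructor
      · intro h
        show Multiset.card _ = N
        rw [show ((funMultisetEquiv D) g) = Finsupp.toMultiset (Finsupp.equivFunOnFinite.symm g)
          from rfl, hcard]
        exact h
      · intro h
        have h2 : Multiset.card (Finsupp.toMultiset (Finsupp.equivFunOnFinite.symm g)) = N := h
        rwa [hcard] at h2)

noncomputable instance degLEFintype (d N : ℕ) : Fintype {f : Fin d → ℕ // ∑ i, f i ≤ N} :=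
  Fintype.ofEquiv _ ((degLEEquiv d N).trans (degEqEquivSym (d+1) N)).symm

lemma card_degLE (d N : ℕ) :
    Fintype.card {f : Fin d → ℕ // ∑ i, f i ≤ N} = (d + N).choose d := by
  rw [Fintype.card_congr ((degLEEquiv d N).trans (degEqEquivSym (d+1) N))]
  rw [Sym.card_sym_eq_choose, Fintype.card_fin]
  have h1 : d + 1 + N - 1 = d + N := by omega
  have h2 : (d + N).choose N = (d + N).choose d := by
    rw [← Nat.choose_symm (Nat.le_add_right d N), Nat.add_sub_cancel_left]
  rw [h1, h2]

lemma integrable_of_cont {d : ℕ} (μ : Measure (Fin d → ℝ)) [IsProbabilityMeasure μ]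
    (hcpt : IsCompact (measSupp μ)) {F : Type*} [NormedAddCommGroup F]
    {g : (Fin d → ℝ) → F} (hg : Continuous g) : Integrable g μ := by
  obtain ⟨C, hC⟩ := hcpt.exists_bound_of_continuousOn hg.continuousOn
  refine Integrable.mono' (integrable_const C) hg.aestronglyMeasurable ?_
  filter_upwards [measSupp_ae μ] with y hy using hC y hy

/-- Tchakaloff's theorem: a compactly supported probability measure on ℝ^d admits, for each
degree `N`, a quadrature rule with at most `C(d+N, d)` nodes in the support of `μ`,
positive weights summing to 1, exact for all polynomials of total degree ≤ N. -/
theorem stmt_2 (d N : ℕ) (μ : Measure (Fin d → ℝ)) [IsProbabilityMeasure μ]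
    (hcpt : IsCompact (measSupp μ)) :
    ∃ M : ℕ, M ≤ (d + N).choose d ∧
      ∃ (x : Fin M → (Fin d → ℝ)) (w : Fin M → ℝ),
        (∀ i, 0 < w i) ∧ (∀ i, x i ∈ measSupp μ) ∧ (∑ i, w i = 1) ∧
        ∀ p : MvPolynomial (Fin d) ℝ, p.totalDegree ≤ N →
          ∑ i, w i * MvPolynomial.eval (x i) p = ∫ y, MvPolynomial.eval y p ∂μ := by
  classical
  set K := measSupp μ with hKdef
  set σ := {f : Fin d → ℕ // ∑ i, f i ≤ N} with hσdef
  set Φ : (Fin d → ℝ) → (σ → ℝ) := fun y f => ∏ i, y i ^ (f.1 i) with hΦdef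
  have hΦcont : Continuous Φ := by
    apply continuous_pi
    intro f
    exact continuous_finset_prod _ fun i _ => (continuous_apply i).pow _
  have hΦint : Integrable Φ μ := integrable_of_cont μ hcpt hΦcont
  -- integral lies in convex hull of image of support
  have hmem : (∫ y, Φ y ∂μ) ∈ convexHull ℝ (Φ '' K) := by
    refine (convex_convexHull ℝ _).integral_mem
      (isCompact_convexHull' (hcpt.image hΦcont)).isClosed ?_ hΦint
    filter_upwards [measSupp_ae μ] with y hy
    exact subset_convexHull ℝ _ (Set.mem_image_of_mem _ hy)
  obtain ⟨ι, hfin, z, w, hzΦ, hai, hpos, hsum, hcomb⟩ :=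
    eq_pos_convex_span_of_mem_convexHull hmem
  -- cardinality bound via the hyperplane of constant coordinate 1
  set f₀ : σ := ⟨fun _ => 0, by simp⟩ with hf₀
  have hz1 : ∀ v ∈ Set.range z, v f₀ = 1 := by
    rintro _ ⟨i, rfl⟩
    obtain ⟨y, _, hy⟩ := hzΦ (Set.mem_range_self i)
    rw [← hy]
    simp [hΦdef, hf₀]
  have hcard : Fintype.card ι ≤ (d + N).choose d := by
    set π : (σ → ℝ) →ₗ[ℝ] ℝ := LinearMap.proj f₀ with hπ
    have hsurj : Function.Surjective π := fun c => ⟨fun _ => c, rfl⟩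
    have hker : Module.finrank ℝ (LinearMap.ker π) = Fintype.card σ - 1 := by
      have h := LinearMap.finrank_range_add_finrank_ker π
      rw [LinearMap.range_eq_top.2 hsurj, finrank_top, Module.finrank_pi,
        Module.finrank_self] at h
      omega
    have hspan : vectorSpan ℝ (Set.range z) ≤ LinearMap.ker π := by
      rw [vectorSpan_def, Submodule.span_le]
      rintro v ⟨a, ha, b, hb, rfl⟩
      simp only [SetLike.mem_coe, LinearMap.mem_ker, hπ, vsub_eq_sub, LinearMap.proj_apply,
        Pi.sub_apply, hz1 a ha, hz1 b hb, sub_self]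
    have h1 := hai.card_le_finrank_succ
    have h2 : Module.finrank ℝ (vectorSpan ℝ (Set.range z)) ≤ Fintype.card σ - 1 :=
      hker ▸ Submodule.finrank_mono hspan
    have hσpos : 1 ≤ Fintype.card σ := Fintype.card_pos_iff.2 ⟨f₀⟩
    have h4 : Fintype.card σ = (d + N).choose d := card_degLE d N
    exact (h1.trans (Nat.add_le_add_right h2 1)).trans
      (le_of_eq (by rw [Nat.sub_add_cancel hσpos, h4]))
  -- construct points and weights
  set M := Fintype.card ι with hM
  set e := (Fintype.equivFin ι).symm with he
  have hx : ∀ i : Fin M, ∃ y ∈ K, Φ y = z (e i) := by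
    intro i
    obtain ⟨y, hyK, hy⟩ := hzΦ (Set.mem_range_self (e i))
    exact ⟨y, hyK, hy⟩
  choose x hxK hxΦ using hx
  refine ⟨M, hcard, x, fun i => w (e i), fun i => hpos _, hxK, ?_, ?_⟩
  · rw [Equiv.sum_comp e w]; exact hsum
  -- quadrature identity for each monomial coordinate
  have key : ∀ f : σ, ∑ i : Fin M, w (e i) * Φ (x i) f = ∫ y, Φ y f ∂μ := by
    intro f
    have h1 : ∑ i : Fin M, w (e i) • z (e i) = ∫ y, Φ y ∂μ := by
      rw [Equiv.sum_comp e (fun j => w j • z j)]; exact hcomb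
    have h2 : (∫ y, Φ y ∂μ) f = ∫ y, Φ y f ∂μ := by
      have := (ContinuousLinearMap.proj (R := ℝ) (φ := fun _ : σ => ℝ) f).integral_comp_comm hΦint
      simpa using this.symm
    calc ∑ i : Fin M, w (e i) * Φ (x i) f
        = (∑ i : Fin M, w (e i) • z (e i)) f := by
          rw [Finset.sum_apply]
          congr 1
          ext i
          rw [← hxΦ i]
          rfl
      _ = ∫ y, Φ y f ∂μ := by rw [h1, h2]
  -- extend to all polynomials of total degree ≤ N
  intro p hp
  have hf : ∀ α ∈ p.support, ∑ i, α i ≤ N := by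
    intro α hα
    have h1 := MvPolynomial.le_totalDegree hα
    have h2 : (α.sum fun _ e => e) = ∑ i, α i := Finsupp.sum_fintype _ _ (fun _ => rfl)
    rw [h2] at h1
    exact h1.trans hp
  set g : (Fin d →₀ ℕ) → σ := fun α => if h : ∑ i, α i ≤ N then ⟨fun i => α i, h⟩ else f₀
    with hg
  have hΦg : ∀ α ∈ p.support, ∀ y, Φ y (g α) = ∏ i, y i ^ α i := by
    intro α hα y
    simp only [hg, dif_pos (hf α hα), hΦdef]
  have heval : ∀ y, MvPolynomial.eval y p
      = ∑ α ∈ p.support, MvPolynomial.coeff α p * Φ y (g α) := by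
    intro y
    rw [MvPolynomial.eval_eq']
    exact Finset.sum_congr rfl fun α hα => by rw [hΦg α hα y]
  have hintg : ∀ α ∈ p.support,
      Integrable (fun y => MvPolynomial.coeff α p * Φ y (g α)) μ :=
    fun α _ => (integrable_of_cont μ hcpt ((continuous_apply (g α)).comp hΦcont)).const_mul _
  calc ∑ i : Fin M, w (e i) * MvPolynomial.eval (x i) p
      = ∑ i : Fin M, ∑ α ∈ p.support,
          MvPolynomial.coeff α p * (w (e i) * Φ (x i) (g α)) := by
        refine Finset.sum_congr rfl fun i _ => ?_
        rw [heval, Finset.mul_sum]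
        exact Finset.sum_congr rfl fun α _ => by ring
    _ = ∑ α ∈ p.support, MvPolynomial.coeff α p
          * ∑ i : Fin M, w (e i) * Φ (x i) (g α) := by
        rw [Finset.sum_comm]
        exact Finset.sum_congr rfl fun α _ => by rw [Finset.mul_sum]
    _ = ∑ α ∈ p.support, MvPolynomial.coeff α p * ∫ y, Φ y (g α) ∂μ := by
        exact Finset.sum_congr rfl fun α _ => by rw [key]
    _ = ∑ α ∈ p.support, ∫ y, MvPolynomial.coeff α p * Φ y (g α) ∂μ := by
        exact Finset.sum_congr rfl fun α _ => (integral_const_mul _ _).symm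
    _ = ∫ y, ∑ α ∈ p.support, MvPolynomial.coeff α p * Φ y (g α) ∂μ :=
        (integral_finset_sum _ hintg).symm
    _ = ∫ y, MvPolynomial.eval y p ∂μ := by
        exact integral_congr_ae (Filter.Eventually.of_forall fun y => (heval y).symm)
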